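/- For any path-connected space X and continuous maps f, g : X → Z, the fibered loop topological complexity equals the fibered topological complexity: TC_{LP}^{(f,g,Z)}(X) = TC^{(f,g,Z)}(X). -/

import Mathlib

open unitInterval Set

/-- A `k`-fold open cover of `A ⊆ X × X` by sets admitting continuous choices of paths
from the first to the second coordinate. -/
def SecCover {X : Type*} [TopologicalSpace X] (A : Set (X × X)) (k : ℕ) : Prop :=
  ∃ U : Fin k → Set A, (∀ i, IsOpen (U i)) ∧ (⋃ i, U i) = Set.univ ∧
    ∀ i, ∃ s : C(U i, C(unitInterval, X)),
      ∀ p : U i, s p 0 = ((p : A) : X × X).1 ∧ s p 1 = ((p : A) : X × X).2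

/-- Relative topological complexity `TC_X(A)`. -/
noncomputable def relTC {X : Type*} [TopologicalSpace X] (A : Set (X × X)) : ℕ∞ :=
  sInf {n : ℕ∞ | ∃ k : ℕ, n = k ∧ SecCover A k}

/-- Lusternik–Schnirelmann category. -/
noncomputable def lsCat (X : Type*) [TopologicalSpace X] : ℕ∞ :=
  sInf {n : ℕ∞ | ∃ k : ℕ, n = k ∧ ∃ U : Fin k → Set X,
    (∀ i, IsOpen (U i)) ∧ (⋃ i, U i) = Set.univ ∧
    ∀ i, ∃ x₀ : X, ContinuousMap.Homotopic
      ⟨Subtype.val, continuous_subtype_val⟩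
      (ContinuousMap.const (U i) x₀)}

/-- Fiber product of `f` and `g`. -/
def fiberProd {X Z : Type*} (f g : X → Z) : Set (X × X) := {p | f p.1 = g p.2}

/-- A `k`-fold open cover of `A` by sets admitting continuous loop sections:
loops based at the first coordinate passing through the second at time `1/2`. -/
def LoopSecCover {X : Type*} [TopologicalSpace X] (A : Set (X × X)) (k : ℕ) : Prop :=
  ∃ U : Fin k → Set A, (∀ i, IsOpen (U i)) ∧ (⋃ i, U i) = Set.univ ∧
    ∀ i, ∃ s : C(U i, C(unitInterval, X)),
      ∀ p : U i, s p 0 = ((p : A) : X × X).1 ∧ s p 1 = ((p : A) : X × X).1 ∧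
        s p ⟨1/2, by norm_num, by norm_num⟩ = ((p : A) : X × X).2

/-- The fibered loop topological complexity. -/
noncomputable def loopTC {X : Type*} [TopologicalSpace X] (A : Set (X × X)) : ℕ∞ :=
  sInf {n : ℕ∞ | ∃ k : ℕ, n = k ∧ LoopSecCover A k}

lemma loopSecCover_iff_secCover {X : Type*} [TopologicalSpace X] (A : Set (X × X)) (k : ℕ) :
    LoopSecCover A k ↔ SecCover A k := by
  constructor
  · rintro ⟨U, hopen, hcov, hsec⟩
    refine ⟨U, hopen, hcov, fun i => ?_⟩
    obtain ⟨s, hs⟩ := hsec i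
    have hσ : Continuous (fun t : unitInterval => (⟨(t : ℝ) / 2, by
        have h1 := t.2.1; have h2 := t.2.2; constructor <;> linarith⟩ : unitInterval)) :=
      Continuous.subtype_mk (continuous_subtype_val.div_const 2) _
    refine ⟨(ContinuousMap.compRightContinuousMap X ⟨_, hσ⟩).comp s, fun p => ?_⟩
    obtain ⟨h0, h1, hhalf⟩ := hs p
    constructor
    · simp only [ContinuousMap.comp_apply, ContinuousMap.compRightContinuousMap_apply,
        ContinuousMap.comp_apply, ContinuousMap.coe_mk]
      convert h0 using 2
      ext; norm_num
    · simp only [ContinuousMap.comp_apply, ContinuousMap.compRightContinuousMap_apply,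
        ContinuousMap.comp_apply, ContinuousMap.coe_mk]
      convert hhalf using 2
      ext; norm_num
  · rintro ⟨U, hopen, hcov, hsec⟩
    refine ⟨U, hopen, hcov, fun i => ?_⟩
    obtain ⟨s, hs⟩ := hsec i
    set a : U i → X := fun p => ((p : A) : X × X).1 with ha
    set b : U i → X := fun p => ((p : A) : X × X).2 with hb
    have hjoint : Continuous (fun q : U i × unitInterval => s q.1 q.2) :=
      continuous_eval.comp ((s.continuous.comp continuous_fst).prodMk continuous_snd)
    set γ : ∀ p : U i, Path (a p) (b p) := fun p => ⟨s p, (hs p).1, (hs p).2⟩ with hγ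
    have hγc : Continuous ↿γ := hjoint
    set L : ∀ p : U i, Path (a p) (a p) := fun p => (γ p).trans (γ p).symm with hL
    have hLc : Continuous ↿L :=
      Path.trans_continuous_family γ hγc _ (Path.symm_continuous_family γ hγc)
    refine ⟨ContinuousMap.curry ⟨↿L, hLc⟩, fun p => ?_⟩
    refine ⟨?_, ?_, ?_⟩
    · show L p 0 = a p; simp
    · show L p 1 = a p; simp
    · show L p ⟨1/2, by norm_num, by norm_num⟩ = b p
      rw [hL]
      simp only [Path.trans_apply]
      rw [dif_pos (by norm_num)]
      have : (⟨2 * (1/2 : ℝ), by norm_num⟩ : unitInterval) = 1 := by ext; norm_num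
      rw [this]
      simp

theorem loopTC_eq_tc_fiber {X Z : Type*} [TopologicalSpace X] [TopologicalSpace Z]
    [PathConnectedSpace X] (f g : X → Z) (hf : Continuous f) (hg : Continuous g) :
    loopTC (fiberProd f g) = relTC (fiberProd f g) := by
  unfold loopTC relTC
  congr 1
  ext n
  simp only [Set.mem_setOf_eq, loopSecCover_iff_secCover]
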